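/- For all nonnegative integers m, n and complex z₁, z₂, q with q ≠ 0: z₁^m z₂^n = q^{-mn} Σ_{k=0}^{min(m,n)} [m choose k]_q [n choose k]_q (q;q)_k q^{k(k-1)/2} h_{m-k,n-k}(z₁, z₂ | q). -/
import Mathlib

open Finset Filter

noncomputable def qPoch (a q : ℂ) (n : ℕ) : ℂ :=
  ∏ j ∈ Finset.range n, (1 - a * q ^ j)

noncomputable def qbinom (q : ℂ) : ℕ → ℕ → ℂ
  | _, 0 => 1
  | 0, _ + 1 => 0
  | m + 1, k + 1 => qbinom q m k + q ^ (k + 1) * qbinom q m (k + 1)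

/-- The first q-analogue of the 2D Hermite polynomials. -/
noncomputable def H2D (q z1 z2 : ℂ) (m n : ℕ) : ℂ :=
  ∑ k ∈ Finset.range (min m n + 1),
    qbinom q m k * qbinom q n k * (-1) ^ k * q ^ (k.choose 2) * qPoch q q k *
      z1 ^ (m - k) * z2 ^ (n - k)

/-- The second q-analogue of the 2D Hermite polynomials. -/
noncomputable def h2D (q z1 z2 : ℂ) (m n : ℕ) : ℂ :=
  ∑ j ∈ Finset.range (min m n + 1),
    qbinom q m j * qbinom q n j * q ^ ((m - j) * (n - j)) * (-1) ^ j * qPoch q q j *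
      z1 ^ (m - j) * z2 ^ (n - j)

/-- The q-2D ultraspherical (q-disk / q-Zernike) polynomials. -/
noncomputable def p2D (q b z1 z2 : ℂ) (m n : ℕ) : ℂ :=
  ∑ k ∈ Finset.range (min m n + 1),
    qbinom q m k * qbinom q n k * (-1) ^ k * q ^ (k.choose 2) * qPoch q q k *
      qPoch (b * q) q (m + n - k) * z1 ^ (m - k) * z2 ^ (n - k)

/-- The infinite q-Pochhammer product (a;q)_∞. -/
noncomputable def qPochInf (a q : ℂ) : ℂ :=
  ∏' j : ℕ, (1 - a * q ^ j)

/-! ### Auxiliary lemmas -/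

lemma qbinom_zero_right (q : ℂ) (m : ℕ) : qbinom q m 0 = 1 := by
  cases m <;> rfl

lemma qbinom_eq_zero (q : ℂ) : ∀ m k : ℕ, m < k → qbinom q m k = 0 := by
  intro m
  induction m with
  | zero => intro k hk; match k, hk with
    | k + 1, _ => rfl
  | succ m ih =>
    intro k hk
    match k, hk with
    | k + 1, hk =>
      show qbinom q m k + q ^ (k + 1) * qbinom q m (k + 1) = 0
      rw [ih k (by omega), ih (k+1) (by omega)]
      ring

lemma qbinom_self (q : ℂ) : ∀ k : ℕ, qbinom q k k = 1 := by
  intro k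
  induction k with
  | zero => rfl
  | succ k ih =>
    show qbinom q k k + q ^ (k + 1) * qbinom q k (k + 1) = 1
    rw [ih, qbinom_eq_zero q k (k+1) (by omega)]
    ring

lemma qbinom_succ_succ (q : ℂ) (m k : ℕ) :
    qbinom q (m+1) (k+1) = qbinom q m k + q ^ (k + 1) * qbinom q m (k + 1) := rfl

lemma qPoch_succ' (a q : ℂ) (n : ℕ) :
    qPoch a q (n+1) = (1 - a) * qPoch (a * q) q n := by
  rw [qPoch, Finset.prod_range_succ', pow_zero, mul_one, mul_comm]
  congr 1
  exact Finset.prod_congr rfl fun j _ => by rw [pow_succ']; ring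

lemma qPoch_succ (a q : ℂ) (n : ℕ) :
    qPoch a q (n+1) = qPoch a q n * (1 - a * q ^ n) := by
  rw [qPoch, Finset.prod_range_succ, qPoch]

lemma qPoch_mul_qbinom (q : ℂ) : ∀ m k : ℕ, k ≤ m →
    qbinom q m k * qPoch q q k * qPoch q q (m - k) = qPoch q q m := by
  intro m
  induction m with
  | zero => intro k hk; interval_cases k; simp [qbinom_zero_right, qPoch]
  | succ m ih =>
    intro k hk
    rcases k with _ | k
    · simp [qbinom_zero_right, qPoch]
    ·
      rw [qbinom_succ_succ]
      rcases Nat.lt_or_ge k m with h | h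
      · have h1 : m + 1 - (k + 1) = (m - (k+1)) + 1 := by omega
        have h2 : m - k = (m - (k+1)) + 1 := by omega
        rw [h1, qPoch_succ q q (m - (k+1)), qPoch_succ q q k, add_mul, add_mul]
        have e1 : qbinom q m k * (qPoch q q k * (1 - q * q ^ k)) * (qPoch q q (m - (k+1)) * (1 - q * q ^ (m - (k+1)))) =
            (qbinom q m k * qPoch q q k * qPoch q q (m - k)) * (1 - q * q ^ k) := by
          rw [h2, qPoch_succ]; ring
        have e2 : q ^ (k+1) * qbinom q m (k+1) * (qPoch q q k * (1 - q * q ^ k)) * (qPoch q q (m - (k+1)) * (1 - q * q ^ (m - (k+1)))) =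
            (qbinom q m (k+1) * qPoch q q (k+1) * qPoch q q (m - (k+1))) * (q ^ (k+1) * (1 - q * q ^ (m - (k+1)))) := by
          rw [qPoch_succ q q k]; ring
        rw [e1, e2, ih k (by omega), ih (k+1) (by omega)]
        rw [qPoch_succ q q m]
        ring_nf
        have h3 : q^2 * q^k * q^(m-(1+k)) = q * q ^ m := by
          rw [← pow_add, ← pow_add, ← pow_succ']; congr 1; omega
        linear_combination (- qPoch q q m) * h3
      · have hk' : k = m := by omega
        subst hk'
        rw [qbinom_eq_zero q k (k+1) (by omega), qbinom_self]
        rw [show k + 1 - (k+1) = 0 from by omega]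
        simp [qPoch]

lemma qbt (q : ℂ) : ∀ (s : ℕ) (x : ℂ),
    ∑ k ∈ range (s+1), qbinom q s k * q ^ (k.choose 2) * (-x) ^ k = qPoch x q s := by
  intro s
  induction s with
  | zero => intro x; simp [qbinom_zero_right, qPoch]
  | succ s ih =>
    intro x
    rw [Finset.sum_range_succ' (fun k => qbinom q (s+1) k * q ^ (k.choose 2) * (-x) ^ k) (s+1)]
    simp only [qbinom_succ_succ, qbinom_zero_right]
    have hsplit : ∀ k : ℕ,
        (qbinom q s k + q ^ (k + 1) * qbinom q s (k + 1)) * q ^ ((k+1).choose 2) * (-x) ^ (k+1)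
        = (-x) * (qbinom q s k * q ^ (k.choose 2) * (-(q*x)) ^ k)
          + ((qbinom q s (k+1) * q ^ ((k+1).choose 2) * (-(q*x)) ^ (k+1))) := by
      intro k
      have hc : (k+1).choose 2 = k.choose 2 + k := by
        rw [Nat.choose_succ_succ, Nat.choose_one_right]; exact Nat.add_comm _ _
      rw [hc]
      have h1 : (-(q*x)) ^ k = q ^ k * (-x) ^ k := by
        rw [show (-(q*x)) = q * (-x) by ring, mul_pow]
      have h2 : (-(q*x)) ^ (k+1) = q ^ (k+1) * (-x) ^ (k+1) := by
        rw [show (-(q*x)) = q * (-x) by ring, mul_pow]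
      rw [h1, h2, pow_add, pow_succ (-x) k]
      ring
    rw [Finset.sum_congr rfl (fun k _ => hsplit k), Finset.sum_add_distrib]
    rw [← Finset.mul_sum, ih (q*x)]
    have hB : ∑ k ∈ range (s+1), qbinom q s (k+1) * q ^ ((k+1).choose 2) * (-(q*x)) ^ (k+1)
        = qPoch (q*x) q s - 1 := by
      have h1 := Finset.sum_range_succ' (fun k => qbinom q s k * q ^ (k.choose 2) * (-(q*x)) ^ k) (s+1)
      have h2 := Finset.sum_range_succ (fun k => qbinom q s k * q ^ (k.choose 2) * (-(q*x)) ^ k) (s+1)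
      rw [qbinom_eq_zero q s (s+1) (by omega)] at h2
      rw [qbinom_zero_right] at h1
      rw [ih (q*x)] at h2
      norm_num at h1 h2
      rw [h2] at h1
      linear_combination -h1
    rw [hB, qPoch_succ']
    norm_num
    ring

lemma qbinom_trinom (q : ℂ) : ∀ m k j : ℕ,
    qbinom q m (k + j) * qbinom q (k + j) k = qbinom q m k * qbinom q (m - k) j := by
  intro m
  induction m with
  | zero =>
    intro k j
    rcases k with _ | k
    · simp [qbinom_zero_right]
    · rcases j with _ | j
      · simp [qbinom_zero_right, qbinom_self]
      · rw [qbinom_eq_zero q 0 (k+1+(j+1)) (by omega), qbinom_eq_zero q 0 (k+1) (by omega)]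
        ring
  | succ m ih =>
    intro k j
    rcases k with _ | k
    · simp [qbinom_zero_right]
    · rcases j with _ | j
      · simp [qbinom_zero_right, qbinom_self]
      · rcases Nat.lt_or_ge k m with h | h
        · have e1 : k + 1 + (j + 1) = (k + (j+1)) + 1 := by omega
          have e3 : k + 1 + j = k + (j+1) := by omega
          rw [e1, qbinom_succ_succ q m (k + (j+1))]
          have hIH1 := ih k (j+1)
          have hIH2 := ih (k+1) j
          have hIH3 := ih (k+1) (j+1)
          rw [e3] at hIH2
          rw [e1] at hIH3
          have e4 : m + 1 - (k + 1) = m - k := by omega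
          have e5 : m - k = (m - (k+1)) + 1 := by omega
          rw [e4, qbinom_succ_succ q m k]
          have pas : qbinom q (m - k) (j+1)
              = qbinom q (m - (k+1)) j + q ^ (j+1) * qbinom q (m - (k+1)) (j+1) := by
            rw [e5, qbinom_succ_succ]
          rw [pas] at hIH1 ⊢
          have hSmall := qbinom_succ_succ q (k + (j+1)) k
          linear_combination hIH1 + q^(k+1) * hIH2 + q^(k+(j+1)+1) * hIH3
            + (qbinom q m (k+(j+1))) * hSmall
        · rw [qbinom_eq_zero q (m+1) (k+1+(j+1)) (by omega)]
          rcases Nat.lt_or_ge m k with h2 | h2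
          · rw [qbinom_eq_zero q (m+1) (k+1) (by omega)]; ring
          · have hkm : k = m := by omega
            rw [hkm, show m + 1 - (m+1) = 0 from by omega, qbinom_eq_zero q 0 (j+1) (by omega)]
            ring

lemma triangle_reindex (f : ℕ → ℕ → ℂ) : ∀ N : ℕ,
    ∑ k ∈ range (N+1), ∑ j ∈ range (N - k + 1), f k j
  = ∑ s ∈ range (N+1), ∑ k ∈ range (s+1), f k (s - k) := by
  intro N
  induction N with
  | zero => simp
  | succ N ih =>
    rw [Finset.sum_range_succ (fun k => ∑ j ∈ range (N + 1 - k + 1), f k j) (N+1),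
       Finset.sum_range_succ (fun s => ∑ k ∈ range (s+1), f k (s-k)) (N+1), ← ih]
    have h : ∀ k ∈ range (N+1), (∑ j ∈ range (N + 1 - k + 1), f k j)
        = (∑ j ∈ range (N - k + 1), f k j) + f k (N + 1 - k) := by
      intro k hk
      rw [mem_range] at hk
      rw [show N + 1 - k + 1 = (N - k + 1) + 1 from by omega, Finset.sum_range_succ]
      congr 2
      omega
    rw [Finset.sum_congr rfl h, Finset.sum_add_distrib]
    rw [show N + 1 - (N+1) + 1 = 1 from by omega, Finset.sum_range_one,
       Finset.sum_range_succ (fun k => f k (N + 1 - k)) (N+1),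
       show N + 1 - (N+1) = 0 from by omega]
    ring

lemma qPoch_one_eq_zero (q : ℂ) (s : ℕ) (hs : 1 ≤ s) : qPoch 1 q s = 0 := by
  rw [qPoch]
  apply Finset.prod_eq_zero (i := 0) (by rw [mem_range]; omega)
  simp

theorem stmt14 (m n : ℕ) (z1 z2 q : ℂ) (hq : q ≠ 0) :
    z1 ^ m * z2 ^ n =
      (q ^ (m * n))⁻¹ *
        ∑ k ∈ Finset.range (min m n + 1),
          qbinom q m k * qbinom q n k * qPoch q q k * q ^ (k.choose 2) *
            h2D q z1 z2 (m - k) (n - k) := by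
  rw [eq_inv_mul_iff_mul_eq₀ (pow_ne_zero (m*n) hq)]
  symm
  have step1 : ∀ k ∈ range (min m n + 1),
      qbinom q m k * qbinom q n k * qPoch q q k * q ^ (k.choose 2) * h2D q z1 z2 (m - k) (n - k)
      = ∑ j ∈ range (min m n - k + 1),
          qbinom q m k * qbinom q n k * qPoch q q k * q ^ (k.choose 2) *
            (qbinom q (m-k) j * qbinom q (n-k) j * q ^ ((m - k - j) * (n - k - j)) * (-1)^j *
              qPoch q q j * z1 ^ (m - k - j) * z2 ^ (n - k - j)) := by
    intro k hk
    rw [mem_range] at hk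
    rw [h2D, show min (m-k) (n-k) = min m n - k from by omega, Finset.mul_sum]
  rw [Finset.sum_congr rfl step1, triangle_reindex]
  have step2 : ∀ s ∈ range (min m n + 1),
      (∑ k ∈ range (s+1),
        qbinom q m k * qbinom q n k * qPoch q q k * q ^ (k.choose 2) *
          (qbinom q (m-k) (s-k) * qbinom q (n-k) (s-k) * q ^ ((m - k - (s-k)) * (n - k - (s-k))) * (-1)^(s-k) *
            qPoch q q (s-k) * z1 ^ (m - k - (s-k)) * z2 ^ (n - k - (s-k))))
      = (qbinom q m s * qbinom q n s * qPoch q q s * (-1)^s * q^((m-s)*(n-s)) * z1^(m-s) * z2^(n-s))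
          * qPoch 1 q s := by
    intro s hs
    rw [mem_range] at hs
    rw [← qbt q s 1, Finset.mul_sum]
    apply Finset.sum_congr rfl
    intro k hk
    rw [mem_range] at hk
    have hks : k ≤ s := by omega
    have e1 : m - k - (s - k) = m - s := by omega
    have e2 : n - k - (s - k) = n - s := by omega
    have tm := qbinom_trinom q m k (s-k)
    have tn := qbinom_trinom q n k (s-k)
    rw [show k + (s - k) = s from by omega] at tm tn
    have tp : qbinom q s k * qPoch q q k * qPoch q q (s - k) = qPoch q q s :=
      qPoch_mul_qbinom q s k hks
    have sgn : ((-1 : ℂ)) ^ (s - k) * (-1)^k = (-1)^s := by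
      rw [← pow_add, show s - k + k = s from by omega]
    have hσ : ((-1:ℂ))^(s-k) = (-1)^s * (-1)^k := by
      rw [← sgn, mul_assoc, ← mul_pow]
      norm_num
    rw [e1, e2, hσ]
    linear_combination (q ^ (k.choose 2) * q^((m-s)*(n-s)) * z1^(m-s) * z2^(n-s) * (-1:ℂ)^s * (-1)^k) *
      ( (- (qbinom q n k * qbinom q (n-k) (s-k) * qPoch q q k * qPoch q q (s-k))) * tm
        + (- (qbinom q m s * qbinom q s k * qPoch q q k * qPoch q q (s-k))) * tn
        + (qbinom q m s * qbinom q n s * qbinom q s k) * tp )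
  rw [Finset.sum_congr rfl step2]
  rw [Finset.sum_eq_single_of_mem 0 (by rw [mem_range]; omega)]
  · simp [qbinom_zero_right, qPoch]
    ring
  · intro b _ hb
    rw [qPoch_one_eq_zero q b (by omega)]
    ring
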